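/- arXiv:1603.09141 — 4 statements merged into one kernel-verified Lean document; each statement's English description precedes it below -/
import Mathlib

section
/- Suppose A_k = X1 Π D_k X2ᵀ for k = 1,...,κ, where X1, X2 have full column rank r, Π is diagonal invertible with positive diagonal, and each D_k is r×r diagonal. Let W1, W2 satisfy W1 X1 Π X2ᵀ W2ᵀ = I_r, and set Q = W1 X1 Π^{1/2}. Then W1 A_k W2ᵀ = Q D_k Q^{-1} for every k; that is, the matrices W1 A_k W2ᵀ are simultaneously diagonalized by the single invertible matrix Q. -/
open Matrix

/-- If `A_k = X1 Π D_k X2ᵀ` and `W1 (X1 Π X2ᵀ) W2ᵀ = I_r`, then with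
`Q = W1 X1 Π^{1/2}` invertible we have `W1 A_k W2ᵀ = Q D_k Q⁻¹` for every `k`. -/
theorem joint_diagonalization
    {κ1 κ2 r κ : ℕ}
    (X1 : Matrix (Fin κ1) (Fin r) ℝ) (X2 : Matrix (Fin κ2) (Fin r) ℝ)
    (π : Fin r → ℝ) (hπ : ∀ j, 0 < π j)
    (hX1 : X1.rank = r) (hX2 : X2.rank = r)
    (d : Fin κ → Fin r → ℝ)
    (A : Fin κ → Matrix (Fin κ1) (Fin κ2) ℝ)
    (hA : ∀ k, A k = X1 * Matrix.diagonal π * Matrix.diagonal (d k) * X2ᵀ)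
    (W1 : Matrix (Fin r) (Fin κ1) ℝ) (W2 : Matrix (Fin r) (Fin κ2) ℝ)
    (hW : W1 * (X1 * Matrix.diagonal π * X2ᵀ) * W2ᵀ = 1)
    (Q : Matrix (Fin r) (Fin r) ℝ)
    (hQ : Q = W1 * X1 * Matrix.diagonal (fun j => Real.sqrt (π j))) :
    IsUnit Q ∧ ∀ k, W1 * A k * W2ᵀ = Q * Matrix.diagonal (d k) * Q⁻¹ := by
  set s : Fin r → ℝ := fun j => Real.sqrt (π j) with hs
  have hss : Matrix.diagonal s * Matrix.diagonal s = Matrix.diagonal π := by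
    rw [Matrix.diagonal_mul_diagonal]
    have : (fun i => s i * s i) = π := funext fun j => Real.mul_self_sqrt (hπ j).le
    rw [this]
  set R : Matrix (Fin r) (Fin r) ℝ := Matrix.diagonal s * X2ᵀ * W2ᵀ with hR
  have hQR : Q * R = 1 := by
    rw [hQ, hR]
    calc W1 * X1 * Matrix.diagonal s * (Matrix.diagonal s * X2ᵀ * W2ᵀ)
        = W1 * (X1 * (Matrix.diagonal s * Matrix.diagonal s) * X2ᵀ) * W2ᵀ := by
          simp only [Matrix.mul_assoc]
      _ = 1 := by rw [hss]; exact hW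
  haveI := invertibleOfRightInverse Q R hQR
  have hQunit : IsUnit Q := isUnit_of_invertible Q
  have hQinv : Q⁻¹ = R := Matrix.inv_eq_right_inv hQR
  refine ⟨hQunit, fun k => ?_⟩
  have hmid : Matrix.diagonal π * Matrix.diagonal (d k)
      = Matrix.diagonal s * (Matrix.diagonal (d k) * Matrix.diagonal s) := by
    simp only [Matrix.diagonal_mul_diagonal]
    have : (fun i => π i * d k i) = fun i => s i * (d k i * s i) := by
      funext j
      have h : s j * s j = π j := Real.mul_self_sqrt (hπ j).le
      rw [← h]; ring
    rw [this]
  rw [hA k, hQinv, hR, hQ]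
  calc W1 * (X1 * Matrix.diagonal π * Matrix.diagonal (d k) * X2ᵀ) * W2ᵀ
      = W1 * (X1 * (Matrix.diagonal π * Matrix.diagonal (d k)) * X2ᵀ) * W2ᵀ := by
        simp only [Matrix.mul_assoc]
    _ = W1 * X1 * Matrix.diagonal s * Matrix.diagonal (d k)
        * (Matrix.diagonal s * X2ᵀ * W2ᵀ) := by
        rw [hmid]; simp only [Matrix.mul_assoc]
end

section
/- Let Q and Q̃ be invertible r×r real matrices and D_1,...,D_κ and D̃_1,...,D̃_κ be r×r diagonal matrices such that Q D_k Q^{-1} = Q̃ D̃_k Q̃^{-1} for all k = 1,...,κ. Suppose that for every pair of distinct indices j1 ≠ j2 in {1,...,r} there exists some k with D_k(j1,j1) ≠ D_k(j2,j2) (i.e., the columns of the r×κ matrix of eigenvalues are pairwise distinct). Then there exist a permutation matrix Δ and an invertible diagonal matrix Λ such that Q̃ = Q Δ Λ, and consequently D̃_k = Δᵀ D_k Δ for all k. -/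
open Matrix

/-- Uniqueness of simultaneous nonorthogonal diagonalization: if
`Q D_k Q⁻¹ = Q̃ D̃_k Q̃⁻¹` for all `k` and the eigenvalue vectors (columns of the
matrix of eigenvalues) are pairwise distinct, then `Q̃ = Q Δ Λ` for a permutation
matrix `Δ` and invertible diagonal `Λ`, and `D̃_k = Δᵀ D_k Δ`. -/
theorem simultaneous_diagonalization_unique
    {r κ : ℕ}
    (Q Qt : Matrix (Fin r) (Fin r) ℝ)
    (hQ : IsUnit Q) (hQt : IsUnit Qt)
    (d dt : Fin κ → Fin r → ℝ)
    (heq : ∀ k, Q * Matrix.diagonal (d k) * Q⁻¹ = Qt * Matrix.diagonal (dt k) * Qt⁻¹)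
    (hdist : ∀ j1 j2 : Fin r, j1 ≠ j2 → ∃ k, d k j1 ≠ d k j2) :
    ∃ (σ : Equiv.Perm (Fin r)) (lam : Fin r → ℝ),
      (∀ j, lam j ≠ 0) ∧
      Qt = Q * σ.permMatrix ℝ * Matrix.diagonal lam ∧
      ∀ k, Matrix.diagonal (dt k) = (σ.permMatrix ℝ)ᵀ * Matrix.diagonal (d k) * σ.permMatrix ℝ := by
  have hQd : IsUnit Q.det := (Matrix.isUnit_iff_isUnit_det Q).mp hQ
  have hQtd : IsUnit Qt.det := (Matrix.isUnit_iff_isUnit_det Qt).mp hQt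
  have h1 : Q⁻¹ * Q = 1 := Matrix.nonsing_inv_mul Q hQd
  have h1' : Q * Q⁻¹ = 1 := Matrix.mul_nonsing_inv Q hQd
  have h2 : Qt⁻¹ * Qt = 1 := Matrix.nonsing_inv_mul Qt hQtd
  have h2' : Qt * Qt⁻¹ = 1 := Matrix.mul_nonsing_inv Qt hQtd
  set M : Matrix (Fin r) (Fin r) ℝ := Q⁻¹ * Qt with hM
  set N : Matrix (Fin r) (Fin r) ℝ := Qt⁻¹ * Q with hN
  have hNM : N * M = 1 := by
    rw [hN, hM, Matrix.mul_assoc, ← Matrix.mul_assoc Q, h1', Matrix.one_mul, h2]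
  have hcomm : ∀ k, Matrix.diagonal (d k) * M = M * Matrix.diagonal (dt k) := by
    intro k
    have h := congrArg (fun X => Q⁻¹ * X * Qt) (heq k)
    calc Matrix.diagonal (d k) * M
        = Q⁻¹ * (Q * Matrix.diagonal (d k) * Q⁻¹) * Qt := by
          rw [hM]
          simp only [← Matrix.mul_assoc]
          rw [h1, Matrix.one_mul]
      _ = Q⁻¹ * (Qt * Matrix.diagonal (dt k) * Qt⁻¹) * Qt := by rw [heq k]
      _ = M * Matrix.diagonal (dt k) := by
          rw [hM]
          simp only [Matrix.mul_assoc]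
          rw [h2, Matrix.mul_one]
  have key : ∀ (k) (j i : Fin r), M j i ≠ 0 → d k j = dt k i := by
    intro k j i hji
    have h := congrFun (congrFun (hcomm k) j) i
    rw [Matrix.diagonal_mul, Matrix.mul_diagonal] at h
    rw [mul_comm (M j i) (dt k i)] at h
    exact mul_right_cancel₀ hji h
  have huniq : ∀ (i j1 j2 : Fin r), M j1 i ≠ 0 → M j2 i ≠ 0 → j1 = j2 := by
    intro i j1 j2 hj1 hj2
    by_contra hne
    obtain ⟨k, hk⟩ := hdist j1 j2 hne
    exact hk ((key k j1 i hj1).trans (key k j2 i hj2).symm)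
  have hex : ∀ i : Fin r, ∃ j, M j i ≠ 0 := by
    intro i
    by_contra h
    push_neg at h
    have hh := congrFun (congrFun hNM i) i
    rw [Matrix.mul_apply] at hh
    simp [h, Matrix.one_apply] at hh
  choose τ hτ using hex
  have hzero : ∀ a b : Fin r, a ≠ τ b → M a b = 0 := by
    intro a b hab
    by_contra h
    exact hab (huniq b a (τ b) h (hτ b))
  have hcol : ∀ (i1 i2 : Fin r), (N * M) i1 i2 = N i1 (τ i2) * M (τ i2) i2 := by
    intro i1 i2
    rw [Matrix.mul_apply]
    apply Finset.sum_eq_single (τ i2)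
    · intro b _ hb
      rw [hzero b i2 hb, mul_zero]
    · intro hb; exact absurd (Finset.mem_univ _) hb
  have hinj : Function.Injective τ := by
    intro i1 i2 hτeq
    by_contra hne
    have e1 : N i1 (τ i1) * M (τ i1) i1 = 1 := by
      rw [← hcol i1 i1, hNM, Matrix.one_apply_eq]
    have e2 : N i1 (τ i2) * M (τ i2) i2 = 0 := by
      rw [← hcol i1 i2, hNM, Matrix.one_apply_ne hne]
    rw [← hτeq] at e2
    have hN1 : N i1 (τ i1) ≠ 0 := by
      intro h; rw [h, zero_mul] at e1; exact zero_ne_one e1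
    have hM2 : M (τ i1) i2 ≠ 0 := by rw [hτeq]; exact hτ i2
    exact mul_ne_zero hN1 hM2 e2
  have hbij : Function.Bijective τ := Finite.injective_iff_bijective.mp hinj
  let e : Equiv.Perm (Fin r) := Equiv.ofBijective τ hbij
  refine ⟨e.symm, fun b => M (τ b) b, hτ, ?_, ?_⟩
  · have hMeq : M = Equiv.Perm.permMatrix ℝ e.symm * Matrix.diagonal (fun b => M (τ b) b) := by
      ext a b
      rw [Matrix.mul_diagonal]
      unfold Equiv.Perm.permMatrix
      rw [PEquiv.toMatrix_toPEquiv_eq, Matrix.submatrix_apply, id]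
      by_cases hb : a = τ b
      · have : e.symm a = b := by
          rw [hb]; exact e.symm_apply_apply b
        rw [this, Matrix.one_apply_eq, one_mul, hb]
      · have : e.symm a ≠ b := by
          intro h
          apply hb
          rw [← h]
          exact (e.apply_symm_apply a).symm
        rw [Matrix.one_apply_ne this, zero_mul, hzero a b hb]
    rw [Matrix.mul_assoc, ← hMeq, hM, ← Matrix.mul_assoc, h1', Matrix.one_mul]
  · intro k
    have htrans : (Equiv.Perm.permMatrix ℝ e.symm)ᵀ = e.toPEquiv.toMatrix := by
      have h3 : e.toPEquiv = (e.symm).toPEquiv.symm := by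
        rw [← Equiv.toPEquiv_symm, Equiv.symm_symm]
      rw [h3, PEquiv.toMatrix_symm]
    rw [htrans]
    unfold Equiv.Perm.permMatrix
    rw [PEquiv.toMatrix_toPEquiv_mul, PEquiv.mul_toMatrix_toPEquiv]
    ext a b
    simp only [Matrix.submatrix_apply, id_eq, Equiv.symm_symm]
    have hea : e a = τ a := rfl
    have heb : e b = τ b := rfl
    by_cases hab : a = b
    · subst hab
      rw [Matrix.diagonal_apply_eq, Matrix.diagonal_apply_eq, hea]
      exact (key k (τ a) a (hτ a)).symm
    · rw [Matrix.diagonal_apply_ne _ hab, Matrix.diagonal_apply_ne]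
      intro h
      exact hab (e.injective h)
end

section
/- Let {Z_i} be a stationary Markov chain on {1,...,r} with transition matrix K and stationary distribution π (so πᵀK = πᵀ), and let Y_i be conditionally independent given the chain with the distribution of Y_i depending only on Z_i, P(Y_i = y | Z_i = j) = p_j(y) for y in a finite set of size κ. Let P be the κ×r matrix with columns p_j and Π = diag(π). Then the three-way contingency table of (Y_1, Y_2, Y_3) satisfies ℙ(a,b,c) = Σ_{j=1}^r π_j a_j(a) p_j(b) b_j(c), where the vectors b_j are the columns of B = P Kᵀ and the vectors a_j are the columns of A = P Π K Π^{-1}. -/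
open Matrix

/-- Hidden Markov model with `r` states, transition matrix `K`,
stationary distribution `π` and emission pmfs `p_j`. The joint pmf of
`(Z1,Z2,Z3,Y1,Y2,Y3)` is `π_{j1} K(j1,j2) K(j2,j3) p_{j1}(a) p_{j2}(b) p_{j3}(c)`.
Then the contingency table of `(Y1,Y2,Y3)` factors as
`ℙ(a,b,c) = Σ_j π_j a_j(a) p_j(b) b_j(c)` where the `a_j` are the columns of
`A = P Π K Π⁻¹` and the `b_j` are the columns of `B = P Kᵀ`. -/
theorem hmm_triad_decomposition
    {r κ : ℕ}
    (π : Fin r → ℝ) (K : Matrix (Fin r) (Fin r) ℝ)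
    (p : Fin r → Fin κ → ℝ)
    (hπpos : ∀ j, 0 < π j)
    (hstat : ∀ j2, ∑ j1, π j1 * K j1 j2 = π j2)
    (P : Matrix (Fin κ) (Fin r) ℝ) (hP : P = Matrix.of fun y j => p j y)
    (A : Matrix (Fin κ) (Fin r) ℝ)
    (hA : A = P * Matrix.diagonal π * K * Matrix.diagonal (fun j => (π j)⁻¹))
    (B : Matrix (Fin κ) (Fin r) ℝ) (hB : B = P * Kᵀ)
    (table : Fin κ → Fin κ → Fin κ → ℝ)
    (htable : ∀ a b c, table a b c =
      ∑ j1, ∑ j2, ∑ j3, π j1 * K j1 j2 * K j2 j3 * p j1 a * p j2 b * p j3 c) :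
    ∀ a b c, table a b c = ∑ j, π j * A a j * p j b * B c j := by
  intro a b c
  have hπ : ∀ j, π j ≠ 0 := fun j => (hπpos j).ne'
  subst hP hA hB
  rw [htable, Finset.sum_comm]
  refine Finset.sum_congr rfl fun j _ => ?_
  rw [Matrix.mul_diagonal, Matrix.mul_apply]
  simp only [Matrix.mul_apply, Matrix.mul_diagonal, Matrix.transpose_apply, Matrix.of_apply,
    Finset.sum_mul, Finset.mul_sum]
  rw [Finset.sum_comm]  -- maybe unneeded
  refine Finset.sum_congr rfl fun j1 _ => ?_
  refine Finset.sum_congr rfl fun j3 _ => ?_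
  simp only [Matrix.diagonal_apply, mul_ite, mul_zero, ite_mul, zero_mul, Finset.sum_ite_eq, Finset.sum_ite_eq', Finset.mem_univ, if_true]
  field_simp
  rw [eq_div_iff (hπ j)]
end

section
/- Let A_0 = X1 Π X2ᵀ with X1 ∈ ℝ^{κ1×r}, X2 ∈ ℝ^{κ2×r} of full column rank and Π = diag(π) with all π_j ≠ 0, and suppose the matrices X1, X2 and the diagonal entries x_{3j}(k) of the slices A_k = X1 Π diag_k(X3) X2ᵀ are such that the columns of X3 ∈ ℝ^{κ3×r} are pairwise distinct. Then the columns of X3 are identified up to a permutation from the data (A_0, A_1, ..., A_{κ3}): any two families (X1, X2, X3, π) and (X̃1, X̃2, X̃3, π̃) generating the same A_0 and slices, with both satisfying the rank and distinct-columns conditions, have X̃3 = X3 Δ for some permutation matrix Δ. -/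
open Matrix

lemma aux_isUnit_of_rank_eq {r : ℕ} (B : Matrix (Fin r) (Fin r) ℝ) (h : B.rank = r) :
    IsUnit B := by
  rw [← Matrix.mulVec_surjective_iff_isUnit]
  have htop : LinearMap.range B.mulVecLin = ⊤ := by
    apply Submodule.eq_top_of_finrank_eq
    rw [← Matrix.rank, h]
    simp
  intro v
  obtain ⟨w, hw⟩ := LinearMap.range_eq_top.mp htop v
  exact ⟨w, hw⟩

lemma aux_left_inverse {κ r : ℕ} (X : Matrix (Fin κ) (Fin r) ℝ) (h : X.rank = r) :
    ∃ L : Matrix (Fin r) (Fin κ) ℝ, L * X = 1 := by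
  have h2 : (Xᵀ * X).rank = r := by rw [Matrix.rank_transpose_mul_self, h]
  have hu : IsUnit (Xᵀ * X) := aux_isUnit_of_rank_eq _ h2
  refine ⟨(Xᵀ * X)⁻¹ * Xᵀ, ?_⟩
  rw [Matrix.mul_assoc]
  exact Matrix.nonsing_inv_mul _ ((Matrix.isUnit_iff_isUnit_det _).mp hu)

/-- Identification of the third factor up to a column permutation.
If two families `(X1, X2, X3, π)` and `(X̃1, X̃2, X̃3, π̃)` — each with `X1, X2` of full
column rank, nonzero weights, and pairwise-distinct columns of `X3` — generate the same
two-dimensional submodel `A_0 = X1 Π X2ᵀ` and the same slices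
`A_k = X1 Π diag_k(X3) X2ᵀ`, then `X̃3 = X3 Δ` for some permutation matrix `Δ`. -/
theorem identification_of_X3_up_to_permutation
    {κ1 κ2 κ3 r : ℕ}
    (X1 Xt1 : Matrix (Fin κ1) (Fin r) ℝ)
    (X2 Xt2 : Matrix (Fin κ2) (Fin r) ℝ)
    (X3 Xt3 : Matrix (Fin κ3) (Fin r) ℝ)
    (π πt : Fin r → ℝ)
    (hX1 : X1.rank = r) (hX2 : X2.rank = r)
    (hXt1 : Xt1.rank = r) (hXt2 : Xt2.rank = r)
    (hπ : ∀ j, π j ≠ 0) (hπt : ∀ j, πt j ≠ 0)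
    (hcol : ∀ j1 j2 : Fin r, j1 ≠ j2 → ∃ k, X3 k j1 ≠ X3 k j2)
    (hcolt : ∀ j1 j2 : Fin r, j1 ≠ j2 → ∃ k, Xt3 k j1 ≠ Xt3 k j2)
    (hA0 : X1 * Matrix.diagonal π * X2ᵀ = Xt1 * Matrix.diagonal πt * Xt2ᵀ)
    (hAk : ∀ k : Fin κ3,
      X1 * Matrix.diagonal π * Matrix.diagonal (fun j => X3 k j) * X2ᵀ
        = Xt1 * Matrix.diagonal πt * Matrix.diagonal (fun j => Xt3 k j) * Xt2ᵀ) :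
    ∃ σ : Equiv.Perm (Fin r), Xt3 = X3 * σ.permMatrix ℝ := by
  classical
  -- left inverse of X1 and "right inverse" of X2ᵀ
  obtain ⟨L1, hL1⟩ := aux_left_inverse X1 hX1
  obtain ⟨L2, hL2⟩ := aux_left_inverse X2 hX2
  set R2 : Matrix (Fin κ2) (Fin r) ℝ := L2ᵀ with hR2def
  have hR2 : X2ᵀ * R2 = 1 := by
    rw [hR2def, ← Matrix.transpose_mul, hL2, Matrix.transpose_one]
  set B : Matrix (Fin r) (Fin r) ℝ := L1 * Xt1 * Matrix.diagonal πt with hBdef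
  set C : Matrix (Fin r) (Fin r) ℝ := Xt2ᵀ * R2 with hCdef
  -- sandwiching A0
  have hBC : B * C = Matrix.diagonal π := by
    have h := congrArg (fun M => L1 * M * R2) hA0
    simp only [← Matrix.mul_assoc] at h
    rw [hL1, Matrix.one_mul] at h
    rw [hBdef, hCdef]
    simp only [← Matrix.mul_assoc]
    rw [← h, Matrix.mul_assoc, hR2, Matrix.mul_one]
  -- sandwiching the slices
  have hBk : ∀ k : Fin κ3,
      Matrix.diagonal π * Matrix.diagonal (fun j => X3 k j)
        = B * Matrix.diagonal (fun j => Xt3 k j) * C := by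
    intro k
    have h := congrArg (fun M => L1 * M * R2) (hAk k)
    simp only [← Matrix.mul_assoc] at h
    rw [hL1, Matrix.one_mul] at h
    rw [hBdef, hCdef]
    simp only [← Matrix.mul_assoc]
    rw [← h, Matrix.mul_assoc _ X2ᵀ R2, hR2, Matrix.mul_one]
  -- diagonal π is invertible
  have hdπ : IsUnit (Matrix.diagonal π).det := by
    rw [Matrix.det_diagonal]
    exact isUnit_iff_ne_zero.mpr (Finset.prod_ne_zero_iff.mpr (fun j _ => hπ j))
  -- B is invertible
  have hdB : IsUnit B.det := by
    have : IsUnit (B * C).det := by rw [hBC]; exact hdπ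
    rw [Matrix.det_mul] at this
    exact isUnit_of_mul_isUnit_left this
  have hCeq : C = B⁻¹ * Matrix.diagonal π := by
    rw [← hBC, ← Matrix.mul_assoc, Matrix.nonsing_inv_mul B hdB, Matrix.one_mul]
  -- the key intertwining relation : D3k * B = B * Dt3k
  have hDB : ∀ k : Fin κ3,
      Matrix.diagonal (fun j => X3 k j) * B = B * Matrix.diagonal (fun j => Xt3 k j) := by
    intro k
    have h := hBk k
    rw [hCeq, ← Matrix.mul_assoc] at h
    -- h : diag π * D3k = B * Dt3k * B⁻¹ * diag π
    have h2 := congrArg (fun M => M * (Matrix.diagonal π)⁻¹) h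
    rw [Matrix.mul_assoc (B * Matrix.diagonal (fun j => Xt3 k j) * B⁻¹),
      Matrix.mul_nonsing_inv _ hdπ, Matrix.mul_one] at h2
    have hcomm : Matrix.diagonal π * Matrix.diagonal (fun j => X3 k j)
        = Matrix.diagonal (fun j => X3 k j) * Matrix.diagonal π := by
      rw [Matrix.diagonal_mul_diagonal, Matrix.diagonal_mul_diagonal]
      exact congrArg Matrix.diagonal (funext fun i => mul_comm _ _)
    rw [hcomm, Matrix.mul_assoc, Matrix.mul_nonsing_inv _ hdπ, Matrix.mul_one] at h2
    -- h2 : D3k = B * Dt3k * B⁻¹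
    calc Matrix.diagonal (fun j => X3 k j) * B
        = B * Matrix.diagonal (fun j => Xt3 k j) * B⁻¹ * B := by rw [← h2]
      _ = B * Matrix.diagonal (fun j => Xt3 k j) * (B⁻¹ * B) := by
          rw [Matrix.mul_assoc]
      _ = B * Matrix.diagonal (fun j => Xt3 k j) := by
          rw [Matrix.nonsing_inv_mul _ hdB, Matrix.mul_one]
  -- entrywise version
  have key : ∀ (k : Fin κ3) (i j : Fin r), X3 k i * B i j = B i j * Xt3 k j := by
    intro k i j
    have h := congrFun (congrFun (hDB k) i) j
    rwa [Matrix.diagonal_mul, Matrix.mul_diagonal] at h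
  -- every column of B has a nonzero entry
  have hnz : ∀ j : Fin r, ∃ i : Fin r, B i j ≠ 0 := by
    intro j
    by_contra hc
    push_neg at hc
    have h1 : (B⁻¹ * B) j j = 1 := by
      rw [Matrix.nonsing_inv_mul _ hdB, Matrix.one_apply_eq]
    rw [Matrix.mul_apply] at h1
    simp only [hc, mul_zero, Finset.sum_const_zero] at h1
    exact zero_ne_one h1
  -- define the map τ
  choose τ hτ using hnz
  have hτcol : ∀ (j : Fin r) (k : Fin κ3), Xt3 k j = X3 k (τ j) := by
    intro j k
    have h := key k (τ j) j
    rw [mul_comm (X3 k (τ j)) (B (τ j) j)] at h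
    exact (mul_left_cancel₀ (hτ j) h).symm
  have hinj : Function.Injective τ := by
    intro j1 j2 h12
    by_contra hne
    obtain ⟨k, hk⟩ := hcolt j1 j2 hne
    exact hk (by rw [hτcol j1 k, hτcol j2 k, h12])
  have hbij : Function.Bijective τ := Finite.injective_iff_bijective.mp hinj
  let e : Equiv.Perm (Fin r) := Equiv.ofBijective τ hbij
  refine ⟨e.symm, ?_⟩
  rw [Equiv.Perm.permMatrix, PEquiv.mul_toMatrix_toPEquiv]
  ext k j
  rw [Matrix.submatrix_apply, Equiv.symm_symm, id]
  exact hτcol j k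
end
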